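/- Let J ⊆ ℤ be a nonempty order-connected set, let κ > 1, let n ≥ 1 be an integer, let L ≥ 1, and let r : J → (0,∞) satisfy the L-Lipschitz growth condition and the (κ,n,0)-flaring property. If r does not attain a minimum on J, then exactly one of the following holds: (a) J is unbounded above and r_i → 0 as i → +∞; or (b) J is unbounded below and r_i → 0 as i → −∞. -/

import Mathlib

open Filter

private lemma max_resolve {a b c : ℝ} (h : c ≤ max a b) (hb : b < c) : c ≤ a := by
  rcases le_max_iff.mp h with h' | h'
  · exact h'
  · linarith

/-- Lipschitz chain bounds in both directions. -/
private lemma chain_up (J : Set ℤ) (L : ℝ) (hL : 1 ≤ L) (r : ℤ → ℝ)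
    (hlip : ∀ j ∈ J, ∀ k ∈ J, |j - k| = 1 → r j ≤ L * r k) :
    ∀ s : ℕ, ∀ a : ℤ, (∀ i : ℤ, a ≤ i → i ≤ a + s → i ∈ J) →
      r (a + s) ≤ L ^ s * r a ∧ r a ≤ L ^ s * r (a + s) := by
  have hL0 : (0:ℝ) < L := lt_of_lt_of_le one_pos hL
  intro s
  induction s with
  | zero => intro a _; simp
  | succ s ih =>
    intro a hmem
    have hmem' : ∀ i : ℤ, a ≤ i → i ≤ a + s → i ∈ J := by
      intro i h1 h2; exact hmem i h1 (by push_cast; omega)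
    obtain ⟨h1, h2⟩ := ih a hmem'
    have hmA : (a + s : ℤ) ∈ J := hmem _ (by omega) (by push_cast; omega)
    have hmB : (a + s + 1 : ℤ) ∈ J := hmem _ (by omega) (by push_cast; omega)
    have e1 : r (a + s + 1) ≤ L * r (a + s) := hlip _ hmB _ hmA (by simp)
    have e2 : r (a + s) ≤ L * r (a + s + 1) := hlip _ hmA _ hmB (by simp)
    constructor
    · have : r (a + s + 1) ≤ L * (L ^ s * r a) := le_trans e1 (by
        exact mul_le_mul_of_nonneg_left h1 hL0.le)
      calc r (a + (s+1:ℕ)) = r (a + s + 1) := by push_cast; ring_nf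
        _ ≤ L * (L ^ s * r a) := this
        _ = L ^ (s+1) * r a := by ring
    · have : r a ≤ L ^ s * (L * r (a + s + 1)) :=
        le_trans h2 (mul_le_mul_of_nonneg_left e2 (by positivity))
      calc r a ≤ L ^ s * (L * r (a + s + 1)) := this
        _ = L ^ (s+1) * r (a + (s+1:ℕ)) := by push_cast; ring_nf

/-- Once `r` flares to the right, it keeps growing geometrically to the right. -/
private lemma growth_right (J : Set ℤ) (hJ : J.OrdConnected)
    (κ : ℝ) (hκ : 1 < κ) (n : ℤ) (hn : 1 ≤ n)
    (r : ℤ → ℝ) (hpos : ∀ j ∈ J, 0 < r j)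
    (hflare : ∀ j : ℤ, j - n ∈ J → j ∈ J → j + n ∈ J → 0 < r j →
      κ * r j ≤ max (r (j - n)) (r (j + n)))
    (j : ℤ) (hj : j ∈ J) (hjn : j + n ∈ J) (h : κ * r j ≤ r (j + n)) :
    ∀ k : ℕ, j + n + k * n ∈ J → κ ^ k * r (j + n) ≤ r (j + n + k * n) := by
  have hκ0 : (0:ℝ) < κ := lt_trans one_pos hκ
  have step : ∀ k : ℕ, j + n + k * n ∈ J → κ * r (j + k * n) ≤ r (j + k * n + n) := by
    intro k
    induction k with
    | zero => intro _; simpa using h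
    | succ k ih =>
      simp only [Nat.cast_add, Nat.cast_one]
      intro hk2
      have hkn : (0:ℤ) ≤ (k:ℤ) * n := mul_nonneg (Int.natCast_nonneg k) (by linarith)
      have hk1 : j + n + (k:ℤ) * n ∈ J := hJ.out hj hk2 ⟨by linarith, by linarith⟩
      have ihk : κ * r (j + (k:ℤ) * n) ≤ r (j + (k:ℤ) * n + n) := ih hk1
      have hmmnJ : j + ((k:ℤ) + 1) * n - n ∈ J := by
        have e : j + ((k:ℤ) + 1) * n - n = j + (k:ℤ) * n := by ring
        rw [e]; exact hJ.out hj hk2 ⟨by linarith, by linarith⟩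
      have hmJ : j + ((k:ℤ) + 1) * n ∈ J := by
        have e : j + n + (k:ℤ) * n = j + ((k:ℤ) + 1) * n := by ring
        rw [← e]; exact hk1
      have hmnJ : j + ((k:ℤ) + 1) * n + n ∈ J := by
        have e : j + n + ((k:ℤ) + 1) * n = j + ((k:ℤ) + 1) * n + n := by ring
        rw [← e]; exact hk2
      have hposm : 0 < r (j + ((k:ℤ) + 1) * n) := hpos _ hmJ
      have hfl := hflare (j + ((k:ℤ) + 1) * n) hmmnJ hmJ hmnJ hposm
      have hlt : r (j + ((k:ℤ) + 1) * n - n) < κ * r (j + ((k:ℤ) + 1) * n) := by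
        have e : j + ((k:ℤ) + 1) * n - n = j + (k:ℤ) * n := by ring
        have e2 : j + (k:ℤ) * n + n = j + ((k:ℤ) + 1) * n := by ring
        rw [e]
        rw [e2] at ihk
        have hp : 0 < r (j + (k:ℤ) * n) :=
          hpos _ (by rw [show j + (k:ℤ) * n = j + ((k:ℤ)+1)*n - n by ring]; exact hmmnJ)
        nlinarith
      exact max_resolve (by rwa [max_comm] at hfl) hlt
  intro k
  induction k with
  | zero => intro _; simp
  | succ k ih =>
    simp only [Nat.cast_add, Nat.cast_one]
    intro hk2
    have hkn : (0:ℤ) ≤ (k:ℤ) * n := mul_nonneg (Int.natCast_nonneg k) (by linarith)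
    have hk1 : j + n + (k:ℤ) * n ∈ J := hJ.out hj hk2 ⟨by linarith, by linarith⟩
    have ihk : κ ^ k * r (j + n) ≤ r (j + n + (k:ℤ) * n) := ih hk1
    have hst : κ * r (j + ((k:ℤ)+1) * n) ≤ r (j + ((k:ℤ)+1) * n + n) := by
      have := step (k+1) (by simp only [Nat.cast_add, Nat.cast_one]; exact hk2)
      simpa only [Nat.cast_add, Nat.cast_one] using this
    have e : j + ((k:ℤ)+1) * n = j + n + (k:ℤ) * n := by ring
    have e2 : j + ((k:ℤ)+1) * n + n = j + n + ((k:ℤ)+1) * n := by ring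
    rw [e2, e] at hst
    have hp : 0 < r (j + n) := hpos _ hjn
    calc κ ^ (k+1) * r (j + n) = κ * (κ ^ k * r (j + n)) := by ring
      _ ≤ κ * r (j + n + (k:ℤ) * n) := by nlinarith
      _ ≤ r (j + n + ((k:ℤ)+1) * n) := hst

private lemma aux_main (J : Set ℤ) (hJne : J.Nonempty) (hJ : J.OrdConnected)
    (κ : ℝ) (hκ : 1 < κ) (n : ℤ) (hn : 1 ≤ n) (L : ℝ) (hL : 1 ≤ L)
    (r : ℤ → ℝ) (hpos : ∀ j ∈ J, 0 < r j)
    (hlip : ∀ j ∈ J, ∀ k ∈ J, |j - k| = 1 → r j ≤ L * r k)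
    (hflare : ∀ j : ℤ, j - n ∈ J → j ∈ J → j + n ∈ J → 0 < r j →
      κ * r j ≤ max (r (j - n)) (r (j + n)))
    (hnomin : ¬ ∃ i ∈ J, ∀ j ∈ J, r i ≤ r j)
    (hNFR : ∀ j ∈ J, j + n ∈ J → r (j + n) < κ * r j) :
    (¬ BddAbove J ∧ Filter.Tendsto r Filter.atTop (nhds 0)) ∧
    ¬ (¬ BddBelow J ∧ Filter.Tendsto r Filter.atBot (nhds 0)) := by
  have hκ0 : (0:ℝ) < κ := lt_trans one_pos hκ
  have hL0 : (0:ℝ) < L := lt_of_lt_of_le one_pos hL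
  obtain ⟨b0, hb0⟩ := hJne
  set n' : ℕ := n.toNat with hn'def
  have hn'e : (n' : ℤ) = n := Int.toNat_of_nonneg (by omega)
  -- Part 1 : J is not bounded above
  have hNB : ¬ BddAbove J := by
    intro hBA
    obtain ⟨b, hb⟩ := hBA
    obtain ⟨M, hMJ, hM⟩ := Int.exists_greatest_of_bdd (P := fun z => z ∈ J)
      ⟨b, fun z hz => hb hz⟩ ⟨b0, hb0⟩
    have hFfin : (J ∩ Set.Icc (M - 2*n) M).Finite :=
      (Set.finite_Icc _ _).subset Set.inter_subset_right
    have hFne : (J ∩ Set.Icc (M - 2*n) M).Nonempty := ⟨M, hMJ, by constructor <;> omega⟩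
    obtain ⟨i0, hi0F, hi0min⟩ := Set.exists_min_image _ r hFfin hFne
    have hclaim : ∀ k : ℕ, ∀ i, i ∈ J → M - i ≤ k → r i0 ≤ r i := by
      intro k
      induction k with
      | zero =>
        intro i hi hik
        have : i = M := le_antisymm (hM i hi) (by omega)
        subst this
        exact hi0min i ⟨hi, by constructor <;> omega⟩
      | succ k ih =>
        intro i hi hik
        by_cases hcase : M - 2*n ≤ i
        · exact hi0min i ⟨hi, ⟨hcase, hM i hi⟩⟩
        · push_neg at hcase
          have h1 : i + n ∈ J := hJ.out hi hMJ ⟨by omega, by omega⟩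
          have h2 : i + n + n ∈ J := hJ.out hi hMJ ⟨by omega, by omega⟩
          have hfl := hflare (i + n) (by simpa using hi) h1 h2 (hpos _ h1)
          have hNF := hNFR (i + n) h1 h2
          have hri : κ * r (i + n) ≤ r i := by
            have := max_resolve hfl hNF
            rwa [add_sub_cancel_right] at this
          have hlt : r (i + n) < r i := by nlinarith [hpos _ h1]
          have := ih (i + n) h1 (by omega)
          linarith
    exact hnomin ⟨i0, hi0F.1, fun j hj => hclaim (M - j).toNat j hj (Int.self_le_toNat _)⟩
  have hall : ∀ m : ℤ, b0 ≤ m → m ∈ J := by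
    intro m hm
    obtain ⟨x, hxJ, hx⟩ := not_bddAbove_iff.mp hNB m
    exact hJ.out hb0 hxJ ⟨hm, hx.le⟩
  -- the generic decay step
  have hdecgen : ∀ m : ℤ, m ∈ J → m + n ∈ J → m + n + n ∈ J → κ * r (m + n) ≤ r m := by
    intro m h0 h1 h2
    have hfl := hflare (m + n) (by simpa using h0) h1 h2 (hpos _ h1)
    have hNF := hNFR (m + n) h1 h2
    have := max_resolve hfl hNF
    rwa [add_sub_cancel_right] at this
  -- Part 2 : r tends to 0 at +∞
  have htop : Filter.Tendsto r Filter.atTop (nhds 0) := by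
    have hdec : ∀ m : ℤ, b0 ≤ m → κ * r (m + n) ≤ r m := by
      intro m hm
      exact hdecgen m (hall m hm) (hall _ (by omega)) (hall _ (by omega))
    have hgeo : ∀ k : ℕ, κ ^ k * r (b0 + k * n) ≤ r b0 := by
      intro k
      induction k with
      | zero => simp
      | succ k ih =>
        simp only [Nat.cast_add, Nat.cast_one]
        have hkn : (0:ℤ) ≤ (k:ℤ) * n := mul_nonneg (Int.natCast_nonneg k) (by omega)
        have hd := hdec (b0 + (k:ℤ) * n) (by linarith)
        have e : b0 + (k:ℤ) * n + n = b0 + ((k:ℤ)+1) * n := by ring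
        rw [e] at hd
        have hpk : (0:ℝ) < κ ^ k := pow_pos hκ0 k
        calc κ ^ (k+1) * r (b0 + ((k:ℤ)+1) * n) = κ ^ k * (κ * r (b0 + ((k:ℤ)+1) * n)) := by ring
          _ ≤ κ ^ k * r (b0 + (k:ℤ) * n) := mul_le_mul_of_nonneg_left hd hpk.le
          _ ≤ r b0 := ih
    rw [Metric.tendsto_atTop]
    intro ε hε
    obtain ⟨K, hK⟩ := pow_unbounded_of_one_lt (L ^ n' * r b0 / ε) hκ
    refine ⟨b0 + K * n, fun t ht => ?_⟩
    have hKn : (0:ℤ) ≤ (K:ℤ) * n := mul_nonneg (Int.natCast_nonneg K) (by omega)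
    have hd0 : (0:ℤ) ≤ t - b0 := by linarith
    set q := (t - b0) / n with hqdef
    set s := (t - b0) % n with hsdef
    have hq0 : 0 ≤ q := Int.ediv_nonneg hd0 (by omega)
    have hs0 : 0 ≤ s := Int.emod_nonneg _ (by omega)
    have hsn : s < n := Int.emod_lt_of_pos _ (by omega)
    have hqs : t - b0 = n * q + s := (Int.mul_ediv_add_emod _ _).symm
    have hqK : (K:ℤ) ≤ q := by
      rw [hqdef, Int.le_ediv_iff_mul_le (by omega : (0:ℤ) < n)]
      linarith
    have hqe : (q.toNat : ℤ) = q := Int.toNat_of_nonneg hq0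
    have hse : (s.toNat : ℤ) = s := Int.toNat_of_nonneg hs0
    have hqn0 : (0:ℤ) ≤ q * n := mul_nonneg hq0 (by omega)
    have ha : t = (b0 + q * n) + (s.toNat : ℤ) := by rw [hse]; linear_combination hqs
    have hchain := (chain_up J L hL r hlip s.toNat (b0 + q * n)
      (fun i h1 h2 => hall i (by linarith))).1
    rw [← ha] at hchain
    have hg := hgeo q.toNat
    rw [hqe] at hg
    have hKq : K ≤ q.toNat := by omega
    have hsn' : s.toNat ≤ n' := by omega
    have hκK : κ ^ K ≤ κ ^ q.toNat := pow_le_pow_right₀ hκ.le hKq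
    have hLs : L ^ s.toNat ≤ L ^ n' := pow_le_pow_right₀ hL hsn'
    have htJ : t ∈ J := hall t (by linarith)
    have hrt0 : 0 < r t := hpos t htJ
    have hrb0 : 0 < r b0 := hpos b0 hb0
    rw [Real.dist_eq, sub_zero, abs_of_pos hrt0]
    have c4 : L ^ n' * r b0 < κ ^ K * ε := by
      rw [div_lt_iff₀ hε] at hK; linarith
    have main : κ ^ K * r t < κ ^ K * ε := by
      calc κ ^ K * r t ≤ κ ^ q.toNat * r t := mul_le_mul_of_nonneg_right hκK hrt0.le
        _ ≤ κ ^ q.toNat * (L ^ s.toNat * r (b0 + q * n)) :=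
            mul_le_mul_of_nonneg_left hchain (pow_pos hκ0 _).le
        _ = L ^ s.toNat * (κ ^ q.toNat * r (b0 + q * n)) := by ring
        _ ≤ L ^ s.toNat * r b0 := mul_le_mul_of_nonneg_left hg (pow_pos hL0 _).le
        _ ≤ L ^ n' * r b0 := mul_le_mul_of_nonneg_right hLs hrb0.le
        _ < κ ^ K * ε := c4
    exact lt_of_mul_lt_mul_left main (pow_pos hκ0 K).le
  refine ⟨⟨hNB, htop⟩, ?_⟩
  -- Part 3 : it is not the case that J is unbounded below with r → 0 at −∞
  rintro ⟨hNBb, htend⟩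
  have hall2 : ∀ m : ℤ, m ∈ J := by
    intro m
    rcases le_or_gt b0 m with h | h
    · exact hall m h
    · obtain ⟨x, hxJ, hx⟩ := not_bddBelow_iff.mp hNBb m
      exact hJ.out hxJ hb0 ⟨hx.le, by omega⟩
  have hdec2 : ∀ m : ℤ, κ * r (m + n) ≤ r m := fun m =>
    hdecgen m (hall2 m) (hall2 _) (hall2 _)
  have hgeo2 : ∀ k : ℕ, κ ^ k * r b0 ≤ r (b0 - k * n) := by
    intro k
    induction k with
    | zero => simp
    | succ k ih =>
      simp only [Nat.cast_add, Nat.cast_one]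
      have hd := hdec2 (b0 - ((k:ℤ)+1) * n)
      have e : b0 - ((k:ℤ)+1) * n + n = b0 - (k:ℤ) * n := by ring
      rw [e] at hd
      calc κ ^ (k+1) * r b0 = κ * (κ ^ k * r b0) := by ring
        _ ≤ κ * r (b0 - (k:ℤ) * n) := mul_le_mul_of_nonneg_left ih hκ0.le
        _ ≤ r (b0 - ((k:ℤ)+1) * n) := hd
  have hrb0 : 0 < r b0 := hpos b0 hb0
  have hc : 0 < r b0 / L ^ n' := div_pos hrb0 (pow_pos hL0 n')
  obtain ⟨N, hN⟩ := Filter.mem_atBot_sets.mp (htend (Metric.ball_mem_nhds (0:ℝ) hc))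
  set t := min N b0 with htdef
  have htb : t ≤ b0 := min_le_right _ _
  have hball := hN t (min_le_left _ _)
  have hlt : r t < r b0 / L ^ n' := by
    have := Metric.mem_ball.mp hball
    rwa [Real.dist_eq, sub_zero, abs_of_pos (hpos t (hall2 t))] at this
  -- lower bound for r t
  set q := (b0 - t) / n with hqdef
  set s := (b0 - t) % n with hsdef
  have hd0 : (0:ℤ) ≤ b0 - t := by omega
  have hq0 : 0 ≤ q := Int.ediv_nonneg hd0 (by omega)
  have hs0 : 0 ≤ s := Int.emod_nonneg _ (by omega)
  have hsn : s < n := Int.emod_lt_of_pos _ (by omega)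
  have hqs : b0 - t = n * q + s := (Int.mul_ediv_add_emod _ _).symm
  have hqe : (q.toNat : ℤ) = q := Int.toNat_of_nonneg hq0
  have hse : (s.toNat : ℤ) = s := Int.toNat_of_nonneg hs0
  have key := (chain_up J L hL r hlip s.toNat t (fun i _ _ => hall2 i)).1
  have e : t + (s.toNat : ℤ) = b0 - q * n := by rw [hse]; linear_combination -hqs
  rw [e] at key
  have hg := hgeo2 q.toNat
  rw [hqe] at hg
  have h1k : (1:ℝ) ≤ κ ^ q.toNat := one_le_pow₀ hκ.le
  have hsn' : s.toNat ≤ n' := by omega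
  have hLs : L ^ s.toNat ≤ L ^ n' := pow_le_pow_right₀ hL hsn'
  have hrt0 : 0 < r t := hpos t (hall2 t)
  have hlow : r b0 ≤ L ^ n' * r t := by
    calc r b0 = 1 * r b0 := by ring
      _ ≤ κ ^ q.toNat * r b0 := mul_le_mul_of_nonneg_right h1k hrb0.le
      _ ≤ r (b0 - q * n) := hg
      _ ≤ L ^ s.toNat * r t := key
      _ ≤ L ^ n' * r t := mul_le_mul_of_nonneg_right hLs hrt0.le
  rw [lt_div_iff₀ (pow_pos hL0 n')] at hlt
  nlinarith

/-- Suppose `r : J → (0,∞)` satisfies the `L`-Lipschitz growth condition and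
the `(κ,n,0)`-flaring property on a nonempty order-connected set `J ⊆ ℤ`. If `r` does not
attain a minimum on `J`, then exactly one of the following holds: `J` is unbounded above
and `r i → 0` as `i → +∞`, or `J` is unbounded below and `r i → 0` as `i → −∞`. -/
theorem no_minimum_implies_vanishing_at_one_end
    (J : Set ℤ) (hJne : J.Nonempty) (hJ : J.OrdConnected)
    (κ : ℝ) (hκ : 1 < κ) (n : ℤ) (hn : 1 ≤ n) (L : ℝ) (hL : 1 ≤ L)
    (r : ℤ → ℝ) (hpos : ∀ j ∈ J, 0 < r j)
    (hlip : ∀ j ∈ J, ∀ k ∈ J, |j - k| = 1 → r j ≤ L * r k)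
    (hflare : ∀ j : ℤ, j - n ∈ J → j ∈ J → j + n ∈ J → 0 < r j →
      κ * r j ≤ max (r (j - n)) (r (j + n)))
    (hnomin : ¬ ∃ i ∈ J, ∀ j ∈ J, r i ≤ r j) :
    Xor'
      (¬ BddAbove J ∧ Filter.Tendsto r Filter.atTop (nhds 0))
      (¬ BddBelow J ∧ Filter.Tendsto r Filter.atBot (nhds 0)) := by
  have hκ0 : (0:ℝ) < κ := lt_trans one_pos hκ
  have hL0 : (0:ℝ) < L := lt_of_lt_of_le one_pos hL
  by_cases hFR : ∃ j : ℤ, j ∈ J ∧ j + n ∈ J ∧ κ * r j ≤ r (j + n)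
  · -- There is a right-flare point; conclusion (b) will hold.
    obtain ⟨jR, hjR, hjRn, hgeR⟩ := hFR
    -- reflected data
    have hJn : (Set.OrdConnected {x : ℤ | -x ∈ J}) := by
      refine ⟨fun x hx y hy z hz => ?_⟩
      exact hJ.out hy hx ⟨neg_le_neg hz.2, neg_le_neg hz.1⟩
    have hpos' : ∀ j ∈ {x : ℤ | -x ∈ J}, 0 < r (-j) := fun j hj => hpos _ hj
    have hflare' : ∀ j : ℤ, j - n ∈ {x : ℤ | -x ∈ J} → j ∈ {x : ℤ | -x ∈ J} →
        j + n ∈ {x : ℤ | -x ∈ J} → 0 < r (-j) →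
        κ * r (-j) ≤ max (r (-(j - n))) (r (-(j + n))) := by
      intro j h1 h2 h3 h4
      have h1' : -j + n ∈ J := by
        have : -(j - n) ∈ J := h1
        rwa [show -(j - n) = -j + n from by ring] at this
      have h3' : -j - n ∈ J := by
        have : -(j + n) ∈ J := h3
        rwa [show -(j + n) = -j - n from by ring] at this
      have := hflare (-j) h3' h2 h1' h4
      rw [show -(j - n) = -j + n from by ring, show -(j + n) = -j - n from by ring, max_comm]
      exact this
    -- growth to the right from jR
    have hGR := growth_right J hJ κ hκ n hn r hpos hflare jR hjR hjRn hgeR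
    -- no left-flare point
    have hNFL : ∀ j ∈ J, j - n ∈ J → r (j - n) < κ * r j := by
      by_contra hcon
      push_neg at hcon
      obtain ⟨jL, hjL, hjLn, hgeL⟩ := hcon
      -- growth to the left from jL, via reflection
      have hGL : ∀ k : ℕ, jL - n - k * n ∈ J →
          κ ^ k * r (jL - n) ≤ r (jL - n - k * n) := by
        have hbaseL : κ * r (-(-jL)) ≤ r (-(-jL + n)) := by
          rw [show -(-jL : ℤ) = jL from by ring, show -(-jL + n) = jL - n from by ring]
          exact hgeL
        have base := growth_right {x : ℤ | -x ∈ J} hJn κ hκ n hn (fun x => r (-x)) hpos'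
          hflare' (-jL) (by simpa using hjL)
          (by show -(-jL + n) ∈ J; rwa [show -(-jL + n) = jL - n from by ring])
          hbaseL
        intro k hk
        have hk' : -jL + n + (k:ℤ) * n ∈ {x : ℤ | -x ∈ J} := by
          show -(-jL + n + (k:ℤ) * n) ∈ J
          rwa [show -(-jL + n + (k:ℤ) * n) = jL - n - k * n from by ring]
        have hres := base k hk'
        rwa [show -(-jL + n) = jL - n from by ring,
          show -(-jL + n + (k:ℤ) * n) = jL - n - k * n from by ring] at hres
      -- now derive a minimum, contradiction
      set n' : ℕ := n.toNat with hn'def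
      have hn'e : (n' : ℤ) = n := Int.toNat_of_nonneg (by omega)
      obtain ⟨K, hK⟩ := pow_unbounded_of_one_lt (L ^ n') hκ
      have hKn : (0:ℤ) ≤ (K:ℤ) * n := mul_nonneg (Int.natCast_nonneg K) (by omega)
      have hminle : min jL jR ≤ jR := min_le_right _ _
      have hminle' : min jL jR ≤ jL := min_le_left _ _
      have hmaxge : jR ≤ max jL jR := le_max_right _ _
      have hmaxge' : jL ≤ max jL jR := le_max_left _ _
      set A := min jL jR - n - K * n with hAdef
      set B := max jL jR + n + K * n with hBdef
      have hFfin : (J ∩ Set.Icc A B).Finite :=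
        (Set.finite_Icc _ _).subset Set.inter_subset_right
      have hFne : (J ∩ Set.Icc A B).Nonempty :=
        ⟨jR, hjR, by constructor <;> omega⟩
      obtain ⟨i0, hi0F, hi0min⟩ := Set.exists_min_image _ r hFfin hFne
      have hjRnF : jR + n ∈ J ∩ Set.Icc A B := ⟨hjRn, by constructor <;> omega⟩
      have hjLnF : jL - n ∈ J ∩ Set.Icc A B := ⟨hjLn, by constructor <;> omega⟩
      have claim : ∀ i ∈ J, r i0 ≤ r i := by
        intro i hi
        by_cases hiB : i ≤ B
        · by_cases hiA : A ≤ i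
          · exact hi0min i ⟨hi, hiA, hiB⟩
          · -- i < A : use left growth from jL
            push_neg at hiA
            set q := (jL - n - i) / n with hqdef
            set s := (jL - n - i) % n with hsdef
            have hd0 : (0:ℤ) < jL - n - i - K * n := by omega
            have hq0 : 0 ≤ q := Int.ediv_nonneg (by omega) (by omega)
            have hs0 : 0 ≤ s := Int.emod_nonneg _ (by omega)
            have hsn : s < n := Int.emod_lt_of_pos _ (by omega)
            have hqs : jL - n - i = n * q + s := (Int.mul_ediv_add_emod _ _).symm
            have hqK : (K:ℤ) ≤ q := by
              rw [hqdef, Int.le_ediv_iff_mul_le (by omega : (0:ℤ) < n)]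
              omega
            have hqe : (q.toNat : ℤ) = q := Int.toNat_of_nonneg hq0
            have hse : (s.toNat : ℤ) = s := Int.toNat_of_nonneg hs0
            have hqn0 : (0:ℤ) ≤ q * n := mul_nonneg hq0 (by omega)
            have hmem : ∀ x : ℤ, i ≤ x → x ≤ i + (s.toNat:ℤ) → x ∈ J := by
              intro x h1 h2
              exact hJ.out hi hjL ⟨h1, by omega⟩
            have key := (chain_up J L hL r hlip s.toNat i hmem).1
            have e : i + (s.toNat : ℤ) = jL - n - q * n := by
              rw [hse]; linear_combination -hqs
            rw [e] at key
            have hmJ : jL - n - q * n ∈ J := by rw [← e]; exact hmem _ (by omega) le_rfl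
            have hg := hGL q.toNat (by rw [hqe]; exact hmJ)
            rw [hqe] at hg
            have hκK : κ ^ K ≤ κ ^ q.toNat := pow_le_pow_right₀ hκ.le (by omega)
            have hLs : L ^ s.toNat ≤ L ^ n' := pow_le_pow_right₀ hL (by omega)
            have hpL : 0 < r (jL - n) := hpos _ hjLn
            have hpi : 0 < r i := hpos _ hi
            have main : L ^ n' * r (jL - n) ≤ L ^ n' * r i := by
              calc L ^ n' * r (jL - n) ≤ κ ^ K * r (jL - n) :=
                    mul_le_mul_of_nonneg_right hK.le hpL.le
                _ ≤ κ ^ q.toNat * r (jL - n) := mul_le_mul_of_nonneg_right hκK hpL.le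
                _ ≤ r (jL - n - q * n) := hg
                _ ≤ L ^ s.toNat * r i := key
                _ ≤ L ^ n' * r i := mul_le_mul_of_nonneg_right hLs hpi.le
            have : r (jL - n) ≤ r i := le_of_mul_le_mul_left main (pow_pos hL0 n')
            exact le_trans (hi0min _ hjLnF) this
        · -- i > B : use right growth from jR
          push_neg at hiB
          set q := (i - (jR + n)) / n with hqdef
          set s := (i - (jR + n)) % n with hsdef
          have hd0 : (0:ℤ) < i - (jR + n) - K * n := by omega
          have hq0 : 0 ≤ q := Int.ediv_nonneg (by omega) (by omega)
          have hs0 : 0 ≤ s := Int.emod_nonneg _ (by omega)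
          have hsn : s < n := Int.emod_lt_of_pos _ (by omega)
          have hqs : i - (jR + n) = q * n + s := by
            have h := (Int.mul_ediv_add_emod (i - (jR + n)) n).symm
            linear_combination h
          have hqK : (K:ℤ) ≤ q := by
            rw [hqdef, Int.le_ediv_iff_mul_le (by omega : (0:ℤ) < n)]
            omega
          have hqe : (q.toNat : ℤ) = q := Int.toNat_of_nonneg hq0
          have hse : (s.toNat : ℤ) = s := Int.toNat_of_nonneg hs0
          have hqn0 : (0:ℤ) ≤ q * n := mul_nonneg hq0 (by omega)
          have hmem : ∀ x : ℤ, jR + n + q * n ≤ x → x ≤ jR + n + q * n + (s.toNat:ℤ) → x ∈ J := by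
            intro x h1 h2
            exact hJ.out hjR hi ⟨by omega, by omega⟩
          have key := (chain_up J L hL r hlip s.toNat (jR + n + q * n) hmem).2
          have e : jR + n + q * n + (s.toNat : ℤ) = i := by
            rw [hse]; linear_combination -hqs
          rw [e] at key
          have hmJ : jR + n + q * n ∈ J := hmem _ le_rfl (by omega)
          have hg := hGR q.toNat (by rw [hqe]; exact hmJ)
          rw [hqe] at hg
          have hκK : κ ^ K ≤ κ ^ q.toNat := pow_le_pow_right₀ hκ.le (by omega)
          have hLs : L ^ s.toNat ≤ L ^ n' := pow_le_pow_right₀ hL (by omega)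
          have hpR : 0 < r (jR + n) := hpos _ hjRn
          have hpi : 0 < r i := hpos _ hi
          have main : L ^ n' * r (jR + n) ≤ L ^ n' * r i := by
            calc L ^ n' * r (jR + n) ≤ κ ^ K * r (jR + n) :=
                  mul_le_mul_of_nonneg_right hK.le hpR.le
              _ ≤ κ ^ q.toNat * r (jR + n) := mul_le_mul_of_nonneg_right hκK hpR.le
              _ ≤ r (jR + n + q * n) := hg
              _ ≤ L ^ s.toNat * r i := key
              _ ≤ L ^ n' * r i := mul_le_mul_of_nonneg_right hLs hpi.le
          have : r (jR + n) ≤ r i := le_of_mul_le_mul_left main (pow_pos hL0 n')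
          exact le_trans (hi0min _ hjRnF) this
      exact hnomin ⟨i0, hi0F.1, claim⟩
    -- apply aux_main to the reflected data
    have hlip' : ∀ j ∈ {x : ℤ | -x ∈ J}, ∀ k ∈ {x : ℤ | -x ∈ J},
        |j - k| = 1 → r (-j) ≤ L * r (-k) := by
      intro j hj k hk h
      exact hlip _ hj _ hk (by rw [show -j - -k = -(j - k) from by ring, abs_neg]; exact h)
    have hnomin' : ¬ ∃ i ∈ {x : ℤ | -x ∈ J}, ∀ j ∈ {x : ℤ | -x ∈ J}, r (-i) ≤ r (-j) := by
      rintro ⟨i, hi, hmin⟩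
      refine hnomin ⟨-i, hi, fun j hj => ?_⟩
      have := hmin (-j) (by simpa using hj)
      simpa using this
    have hNFR' : ∀ j ∈ {x : ℤ | -x ∈ J}, j + n ∈ {x : ℤ | -x ∈ J} →
        r (-(j + n)) < κ * r (-j) := by
      intro j hj hjn
      have h2 : -j - n ∈ J := by
        have : -(j + n) ∈ J := hjn
        rwa [show -(j + n) = -j - n from by ring] at this
      have := hNFL (-j) hj (by rwa [show -j - n = -j - n from rfl])
      rwa [show -(j + n) = -j - n from by ring]
    obtain ⟨⟨hA, hT⟩, hNot⟩ := aux_main {x : ℤ | -x ∈ J} ⟨-jR, by simpa using hjR⟩ hJn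
      κ hκ n hn L hL (fun x => r (-x)) hpos' hlip' hflare' hnomin' hNFR'
    have hBB : ¬ BddBelow J := by
      rintro ⟨b, hb⟩
      exact hA ⟨-b, fun x hx => by have := hb hx; omega⟩
    have hTb : Filter.Tendsto r Filter.atBot (nhds 0) := by
      have hneg : Filter.Tendsto (fun x : ℤ => -x) Filter.atBot Filter.atTop :=
        tendsto_neg_atBot_atTop
      have := hT.comp hneg
      simpa [Function.comp_def] using this
    have hnotA : ¬ (¬ BddAbove J ∧ Filter.Tendsto r Filter.atTop (nhds 0)) := by
      rintro ⟨h1, h2⟩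
      apply hNot
      constructor
      · rintro ⟨b, hb⟩
        refine h1 ⟨-b, fun x hx => ?_⟩
        have : b ≤ -x := hb (show -(-x) ∈ J by simpa using hx)
        omega
      · have hneg : Filter.Tendsto (fun x : ℤ => -x) Filter.atBot Filter.atTop :=
          tendsto_neg_atBot_atTop
        have := h2.comp hneg
        simpa [Function.comp_def] using this
    exact Or.inr ⟨⟨hBB, hTb⟩, hnotA⟩
  · -- No right-flare point anywhere; conclusion (a) holds.
    push_neg at hFR
    obtain ⟨h1, h2⟩ := aux_main J hJne hJ κ hκ n hn L hL r hpos hlip hflare hnomin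
      (fun j hj hjn => hFR j hj hjn)
    exact Or.inl ⟨h1, h2⟩
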